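/- Let k be a field, G and H finite groups with |G| and |H| invertible in k, and let A and B be commutative k-algebras with actions of G and H respectively by k-algebra automorphisms. Then under the induced action of G × H on A ⊗_k B, the natural map A^G ⊗_k B^H → (A ⊗_k B)^{G×H} is an isomorphism. -/

import Mathlib

/-- The subalgebra of `G`-invariant elements of a `k`-algebra `A`. -/
def fixedSubalgebra (G : Type*) (k A : Type*) [Monoid G] [CommSemiring k] [CommRing A]
    [Algebra k A] [MulSemiringAction G A] [SMulCommClass G k A] : Subalgebra k A where
  carrier := {a | ∀ g : G, g • a = a}
  mul_mem' := by intro a b ha hb g; rw [smul_mul', ha g, hb g]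
  one_mem' := fun g => smul_one g
  add_mem' := by intro a b ha hb g; rw [smul_add, ha g, hb g]
  zero_mem' := fun g => smul_zero g
  algebraMap_mem' := by
    intro r g
    rw [Algebra.algebraMap_eq_smul_one, smul_comm g r (1 : A), smul_one]

section AvgAux

variable (k : Type*) [Field k] (G : Type*) [Group G] [Fintype G]
  {A : Type*} [CommRing A] [Algebra k A] [MulSemiringAction G A] [SMulCommClass G k A]
  [Invertible ((Fintype.card G : k))]

/-- Reynolds (averaging) operator. -/
noncomputable def reynolds : A →ₗ[k] A :=
  (⅟(Fintype.card G : k)) • ∑ g : G, (MulSemiringAction.toAlgHom k A g).toLinearMap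

theorem reynolds_apply (a : A) :
    reynolds k G a = (⅟(Fintype.card G : k)) • ∑ g : G, g • a := by
  simp [reynolds, LinearMap.sum_apply, MulSemiringAction.toAlgHom_apply]

theorem reynolds_smul (g : G) (a : A) : g • reynolds k G a = reynolds k G a := by
  rw [reynolds_apply, smul_comm g (⅟(Fintype.card G : k)), Finset.smul_sum]
  congr 1
  refine Fintype.sum_equiv (Equiv.mulLeft g) _ _ fun h => ?_
  simp [mul_smul]

theorem reynolds_fixed (a : A) (ha : ∀ g : G, g • a = a) : reynolds k G a = a := by
  rw [reynolds_apply]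
  simp only [ha, Finset.sum_const, Finset.card_univ]
  rw [← Nat.cast_smul_eq_nsmul k, smul_smul, invOf_mul_self, one_smul]

/-- Reynolds operator with values in the fixed subalgebra. -/
noncomputable def reynolds' : A →ₗ[k] (fixedSubalgebra G k A) :=
  LinearMap.codRestrict (Subalgebra.toSubmodule (fixedSubalgebra G k A)) (reynolds k G)
    fun a g => reynolds_smul k G g a

theorem val_comp_reynolds' :
    (fixedSubalgebra G k A).val.toLinearMap ∘ₗ reynolds' k G = reynolds k G := rfl

end AvgAux

theorem tmap_sum_sum {R M N P Q : Type*} [CommSemiring R] [AddCommMonoid M] [AddCommMonoid N]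
    [AddCommMonoid P] [AddCommMonoid Q] [Module R M] [Module R N] [Module R P] [Module R Q]
    {ι κ : Type*} (s : Finset ι) (t : Finset κ) (f : ι → M →ₗ[R] P) (g : κ → N →ₗ[R] Q) :
    TensorProduct.map (∑ i ∈ s, f i) (∑ j ∈ t, g j)
      = ∑ i ∈ s, ∑ j ∈ t, TensorProduct.map (f i) (g j) := by
  have h : ∀ (F : M →ₗ[R] P), TensorProduct.map F (∑ j ∈ t, g j)
      = ∑ j ∈ t, TensorProduct.map F (g j) := fun F => by
    rw [show TensorProduct.map F = TensorProduct.mapBilinear (RingHom.id R) M N P Q F from rfl, map_sum]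
  have h2 : (TensorProduct.mapBilinear (RingHom.id R) M N P Q) (∑ i ∈ s, f i)
      = ∑ i ∈ s, TensorProduct.mapBilinear (RingHom.id R) M N P Q (f i) := map_sum _ _ _
  calc TensorProduct.map (∑ i ∈ s, f i) (∑ j ∈ t, g j)
      = (∑ i ∈ s, TensorProduct.mapBilinear (RingHom.id R) M N P Q (f i)) (∑ j ∈ t, g j) := by
        rw [show TensorProduct.map (∑ i ∈ s, f i)
          = TensorProduct.mapBilinear (RingHom.id R) M N P Q (∑ i ∈ s, f i) from rfl, h2]
    _ = ∑ i ∈ s, TensorProduct.mapBilinear (RingHom.id R) M N P Q (f i) (∑ j ∈ t, g j) :=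
        LinearMap.sum_apply _ _ _
    _ = _ := Finset.sum_congr rfl fun i _ => h (f i)

theorem flat_aux (k V : Type*) [Field k] [AddCommGroup V] [Module k V] : Module.Flat k V :=
  inferInstance

open scoped TensorProduct in
/-- Invariants commute with tensor products: for finite groups `G`, `H` with invertible
orders acting on `k`-algebras `A`, `B`, the natural map `A^G ⊗ₖ B^H → (A ⊗ₖ B)^{G×H}` is
an isomorphism, i.e. the canonical algebra map `A^G ⊗ₖ B^H → A ⊗ₖ B` is injective with
range the set of elements fixed by every `(g, h) ∈ G × H`. -/
theorem tensor_invariants (k G H A B : Type*) [Field k] [Group G] [Group H]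
    [Fintype G] [Fintype H] [Invertible ((Fintype.card G : k))]
    [Invertible ((Fintype.card H : k))]
    [CommRing A] [Algebra k A] [CommRing B] [Algebra k B]
    [MulSemiringAction G A] [SMulCommClass G k A]
    [MulSemiringAction H B] [SMulCommClass H k B] :
    Function.Injective
      (Algebra.TensorProduct.map (fixedSubalgebra G k A).val (fixedSubalgebra H k B).val) ∧
    Set.range
      (Algebra.TensorProduct.map (fixedSubalgebra G k A).val (fixedSubalgebra H k B).val) =
      {x : A ⊗[k] B | ∀ (g : G) (h : H),
        Algebra.TensorProduct.map (MulSemiringAction.toAlgHom k A g)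
          (MulSemiringAction.toAlgHom k B h) x = x} := by
  have hcoe : ⇑(Algebra.TensorProduct.map (fixedSubalgebra G k A).val (fixedSubalgebra H k B).val)
      = ⇑(TensorProduct.map (fixedSubalgebra G k A).val.toLinearMap
          (fixedSubalgebra H k B).val.toLinearMap) := rfl
  haveI := flat_aux k (fixedSubalgebra G k A)
  haveI := flat_aux k (fixedSubalgebra H k B)
  constructor
  · rw [hcoe, ← LinearMap.lTensor_comp_rTensor]
    exact (Module.Flat.lTensor_preserves_injective_linearMap _ Subtype.val_injective).comp
      (Module.Flat.rTensor_preserves_injective_linearMap _ Subtype.val_injective)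
  · ext x
    simp only [Set.mem_range, Set.mem_setOf_eq]
    constructor
    · rintro ⟨y, rfl⟩ g h
      rw [← AlgHom.comp_apply, ← Algebra.TensorProduct.map_comp]
      congr 2
      · exact AlgHom.ext fun a => a.2 g
      · exact AlgHom.ext fun b => b.2 h
    · intro hx
      refine ⟨TensorProduct.map (reynolds' k G (A := A)) (reynolds' k H (A := B)) x, ?_⟩
      have hterm : ∀ (g : G) (h : H),
          TensorProduct.map (MulSemiringAction.toAlgHom k A g).toLinearMap
            (MulSemiringAction.toAlgHom k B h).toLinearMap x = x := fun g h => hx g h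
      rw [hcoe, ← LinearMap.comp_apply, ← TensorProduct.map_comp, val_comp_reynolds',
        val_comp_reynolds', reynolds, reynolds, TensorProduct.map_smul_left,
        TensorProduct.map_smul_right, tmap_sum_sum]
      simp only [LinearMap.smul_apply, LinearMap.sum_apply, hterm, Finset.sum_const,
        Finset.card_univ]
      rw [← Nat.cast_smul_eq_nsmul k (Fintype.card H) x,
        ← Nat.cast_smul_eq_nsmul k (Fintype.card G), smul_smul, smul_smul, smul_smul]
      rw [show ⅟(Fintype.card G : k) * ⅟(Fintype.card H : k)
          * (Fintype.card G : k) * (Fintype.card H : k)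
        = (⅟(Fintype.card G : k) * (Fintype.card G : k))
          * (⅟(Fintype.card H : k) * (Fintype.card H : k)) by ring]
      rw [invOf_mul_self, invOf_mul_self, one_mul, one_smul]
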